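/- arXiv:math-ph/0201005 — 3 statements merged into one kernel-verified Lean document; each statement's English description precedes it below -/
import Mathlib

section
/- Let H be a complex Hilbert space and u a strongly continuous one-parameter unitary group on H. Let E = ℓ²(ℕ, H) be the Hilbert space of square-summable H-valued sequences, and for t ∈ ℝ let ũ(t) : E → E be the (unitary) operator acting componentwise, (ũ(t)ξ)_l = u(t)(ξ_l). Let ξ, η ∈ E. Then the E-valued map t ↦ ũ(t)ξ is differentiable at t = 0 with derivative η if and only if for every l ∈ ℕ the H-valued map t ↦ u(t)(ξ_l) is differentiable at t = 0 with derivative η_l. Consequently, the domain of the generator of the amplified group ũ consists precisely of those ξ = (ξ_l) such that each ξ_l lies in the domain of the generator d of u and Σ_l ‖d(ξ_l)‖² < ∞. -/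
open Filter Topology

/-- For the componentwise amplification `ũ` of a strongly continuous one-parameter unitary
group `u` to `E = ℓ²(ℕ, H)`, a vector-valued map `t ↦ ũ(t)ξ` is differentiable at `0` with
derivative `η ∈ E` iff each component `t ↦ u(t)ξ_l` is differentiable at `0` with derivative
`η_l` (Lemma 2.6(ii) of the paper). -/
theorem amplified_group_hasDerivAt_iff
    {H : Type*} [NormedAddCommGroup H] [InnerProductSpace ℂ H] [CompleteSpace H]
    (u : ℝ → H →L[ℂ] H)
    (hu_iso : ∀ t (x : H), ‖u t x‖ = ‖x‖)
    (hu_surj : ∀ t, Function.Surjective (u t))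
    (hu_zero : ∀ x : H, u 0 x = x)
    (hu_add : ∀ s t (x : H), u (s + t) x = u s (u t x))
    (hu_cont : ∀ x : H, Continuous fun t => u t x)
    (U : ℝ → lp (fun _ : ℕ => H) 2 → lp (fun _ : ℕ => H) 2)
    (hU : ∀ (t : ℝ) (ξ : lp (fun _ : ℕ => H) 2) (l : ℕ), (U t ξ) l = u t (ξ l))
    (ξ η : lp (fun _ : ℕ => H) 2) :
    HasDerivAt (fun t => U t ξ) η 0 ↔
      ∀ l : ℕ, HasDerivAt (fun t => u t (ξ l)) (η l) 0 := by
  have hp2 : (2 : ENNReal) ≠ 0 := by norm_num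
  constructor
  · intro h l
    have hev : IsBoundedLinearMap ℂ (fun f : lp (fun _ : ℕ => H) 2 => f l) := by
      refine ⟨⟨fun f g => ?_, fun c f => ?_⟩, 1, one_pos, fun f => ?_⟩
      · simp [lp.coeFn_add]
      · simp [lp.coeFn_smul]
      · simpa using lp.norm_apply_le_norm hp2 f l
    have h2 : HasDerivAt (fun t => (U t ξ) l) (η l) 0 :=
      (hev.hasFDerivAt.restrictScalars ℝ).comp_hasDerivAt 0 h
    exact h2.congr_of_eventuallyEq (Eventually.of_forall fun t => (hU t ξ l).symm)
  · intro h
    have key : ∀ (l : ℕ) (t : ℝ), ‖u t (ξ l) - ξ l‖ ≤ ‖η l‖ * |t| := by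
      intro l t
      have hder : ∀ s : ℝ, HasDerivAt (fun r => u r (ξ l)) (u s (η l)) s := by
        intro s
        have hf : HasDerivAt (fun r : ℝ => r - s) 1 s := (hasDerivAt_id s).sub_const s
        have h1 : HasDerivAt (fun r : ℝ => u (r - s) (ξ l)) (η l) s := by
          simpa [Function.comp_def] using
            (h l).scomp_of_eq (𝕜 := ℝ) s (h := fun r : ℝ => r - s) hf (by simp)
        have h2 := ((u s).hasFDerivAt.restrictScalars ℝ).comp_hasDerivAt s h1
        convert h2 using 1
        funext r
        show u r (ξ l) = u s (u (r - s) (ξ l))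
        rw [← hu_add]
        congr 1
        ring
        rfl
      have := convex_univ.norm_image_sub_le_of_norm_hasDerivWithin_le
        (f := fun r => u r (ξ l)) (f' := fun s => u s (η l)) (C := ‖η l‖)
        (fun s _ => (hder s).hasDerivWithinAt) (fun s _ => le_of_eq (hu_iso s (η l)))
        (Set.mem_univ (0 : ℝ)) (Set.mem_univ t)
      simpa [hu_zero, Real.norm_eq_abs] using this
    have hU0 : U 0 ξ = ξ := lp.ext (funext fun l => by rw [hU, hu_zero])
    rw [hasDerivAt_iff_tendsto_slope]
    rw [tendsto_iff_norm_sub_tendsto_zero]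
    -- component formula for the slope difference
    have hcomp : ∀ t : ℝ, ∀ l : ℕ,
        (slope (fun t => U t ξ) 0 t - η) l = t⁻¹ • (u t (ξ l) - ξ l) - η l := by
      intro t l
      have hs : slope (fun t => U t ξ) 0 t = t⁻¹ • (U t ξ - ξ) := by
        rw [slope_def_module]; simp [hU0]
      rw [lp.coeFn_sub, Pi.sub_apply, hs, lp.coeFn_smul, Pi.smul_apply,
        lp.coeFn_sub, Pi.sub_apply, hU]
    -- bound on components
    have hbound : ∀ t : ℝ, t ≠ 0 → ∀ l : ℕ,
        ‖(slope (fun t => U t ξ) 0 t - η) l‖ ≤ 2 * ‖η l‖ := by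
      intro t ht l
      rw [hcomp t l]
      calc ‖t⁻¹ • (u t (ξ l) - ξ l) - η l‖
          ≤ ‖t⁻¹ • (u t (ξ l) - ξ l)‖ + ‖η l‖ := norm_sub_le _ _
        _ ≤ |t|⁻¹ * (‖η l‖ * |t|) + ‖η l‖ := by
            rw [norm_smul, Real.norm_eq_abs, abs_inv]
            gcongr
            exact key l t
        _ ≤ 2 * ‖η l‖ := by
            rw [inv_mul_eq_div, mul_div_assoc, div_self (abs_ne_zero.mpr ht), mul_one]
            linarith
    -- summable bound
    have h2s : Summable (fun l : ℕ => ‖η l‖ ^ 2) := by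
      have := (lp.memℓp η).summable (p := 2) (by norm_num)
      refine this.congr fun l => ?_
      rw [show ((2 : ENNReal).toReal) = ((2 : ℕ) : ℝ) by norm_num, Real.rpow_natCast]
    have hsum : Summable (fun l : ℕ => (2 * ‖η l‖) ^ 2) :=
      (h2s.mul_left 4).congr fun l => by ring
    -- tsum tendsto
    have htsum : Tendsto (fun t : ℝ => ∑' l : ℕ, ‖(slope (fun t => U t ξ) 0 t - η) l‖ ^ 2)
        (𝓝[≠] 0) (𝓝 0) := by
      have hmain := tendsto_tsum_of_dominated_convergence
        (𝓕 := 𝓝[≠] (0 : ℝ))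
        (f := fun t l => ‖(slope (fun t => U t ξ) 0 t - η) l‖ ^ 2)
        (g := fun _ => (0 : ℝ)) (bound := fun l => (2 * ‖η l‖) ^ 2) hsum ?_ ?_
      · simpa using hmain
      · intro l
        have hl := hasDerivAt_iff_tendsto_slope.mp (h l)
        have hl2 : Tendsto (fun t => slope (fun t => u t (ξ l)) 0 t - η l) (𝓝[≠] 0)
            (𝓝 0) := tendsto_sub_nhds_zero_iff.mpr hl
        have hl3 : Tendsto (fun t => ‖slope (fun t => u t (ξ l)) 0 t - η l‖ ^ 2) (𝓝[≠] 0)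
            (𝓝 0) := by simpa using hl2.norm.pow 2
        refine hl3.congr fun t => ?_
        have hsl : slope (fun t => u t (ξ l)) 0 t = t⁻¹ • (u t (ξ l) - ξ l) := by
          rw [slope_def_module]; simp [hu_zero]
        simp only [hcomp, hsl]
      · filter_upwards [self_mem_nhdsWithin] with t ht
        intro l
        rw [Real.norm_eq_abs, abs_of_nonneg (by positivity)]
        exact pow_le_pow_left₀ (norm_nonneg _) (hbound t ht l) 2
    -- conclude
    have hnorm : ∀ t : ℝ, ‖slope (fun t => U t ξ) 0 t - η‖ =
        Real.sqrt (∑' l : ℕ, ‖(slope (fun t => U t ξ) 0 t - η) l‖ ^ 2) := by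
      intro t
      have hn := lp.norm_rpow_eq_tsum (p := 2) (by norm_num)
        (slope (fun t => U t ξ) 0 t - η)
      rw [show ((2 : ENNReal).toReal) = ((2 : ℕ) : ℝ) by norm_num] at hn
      simp only [Real.rpow_natCast] at hn
      rw [← hn, Real.sqrt_sq (norm_nonneg _)]
    have hfin := (Real.continuous_sqrt.tendsto 0).comp htsum
    simp only [Real.sqrt_zero] at hfin
    exact Tendsto.congr (fun t => (hnorm t).symm) hfin
end

section
/- Fix positive integers N and m, and let H be a complex Hilbert space. Denote by W_m the set of all words w = (i₁,…,i_k) over the alphabet {1,…,N} of length k ≤ m, including the empty word. For a word w of length k and a subset J ⊆ {1,…,k}, let w_J denote the subword of w consisting of the letters of w at the positions belonging to J, taken in increasing order of position, and let Jᶜ = {1,…,k} ∖ J. Suppose given a family of bounded linear operators X_w ∈ B(H) (w ∈ W_m), a family of vectors v_w ∈ H (w ∈ W_m), and a family of vectors ζ_w ∈ H (w ∈ W_m) such that for every word w ∈ W_m of length k one has ζ_w = Σ_{J ⊆ {1,…,k}} X_{w_J}(v_{w_{Jᶜ}}). Then (Σ_{w ∈ W_m} ‖ζ_w‖²)^{1/2}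 ≤ √(2/(4N−1)) · (2√N)^{m+1} · (Σ_{w ∈ W_m} ‖X_w‖) · (Σ_{w ∈ W_m} ‖v_w‖²)^{1/2}. -/
/-- The subword of `w` consisting of the letters of `w` at the positions belonging to `J`,
taken in increasing order of position. -/
def wordSelect {N : ℕ} (w : List (Fin N)) (J : Finset (Fin w.length)) : List (Fin N) :=
  (J.sort (· ≤ ·)).map w.get

section Aux

open Finset

/-- Sorting commutes with mapping by `finCongr`. -/
lemma sort_map_finCongr {n k : ℕ} (h : n = k) (J : Finset (Fin n)) :
    ((J.map (finCongr h).toEmbedding).sort (· ≤ ·)) = (J.sort (· ≤ ·)).map (finCongr h) := by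
  rw [Finset.sort, Finset.sort, Finset.map_val]
  exact (Multiset.map_sort _ _ _ _ (fun a _ b _ => by subst h; exact Iff.rfl)).symm

lemma compl_map_finCongr {n k : ℕ} (e : Fin n ≃ Fin k) (J : Finset (Fin n)) :
    (J.map e.toEmbedding)ᶜ = Jᶜ.map e.toEmbedding := by
  ext x; simp [Finset.mem_map_equiv]

/-- `wordSelect` on a word `List.ofFn f` is a mapped sorted finset. -/
lemma wordSelect_ofFn {N k : ℕ} (f : Fin k → Fin N)
    (J : Finset (Fin (List.ofFn f).length)) :
    wordSelect (List.ofFn f) J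
      = ((J.map (finCongr (List.length_ofFn (f := f))).toEmbedding).sort (· ≤ ·)).map f := by
  unfold wordSelect
  rw [sort_map_finCongr, List.map_map]
  have hg : (List.ofFn f).get = f ∘ finCongr (List.length_ofFn (f := f)) :=
    funext fun i => by rw [List.get_ofFn]; rfl
  rw [hg]

lemma map_sort_eq_ofFn {N k : ℕ} (l : List (Fin k)) (f : Fin k → Fin N) :
    l.map f = List.ofFn (f ∘ l.get) := by
  conv_lhs => rw [← List.ofFn_get l]
  rw [List.map_ofFn]

/-- Minkowski's inequality for finite families, via `EuclideanSpace`. -/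
lemma sqrt_sum_sq_sum_le {ι κ : Type*} [Fintype ι] [Fintype κ] (a : ι → κ → ℝ) :
    Real.sqrt (∑ i, (∑ j, a i j) ^ 2) ≤ ∑ j, Real.sqrt (∑ i, (a i j) ^ 2) := by
  classical
  let u : κ → EuclideanSpace ℝ ι := fun j => WithLp.toLp 2 (fun i => a i j)
  have hnorm : ∀ j, ‖u j‖ = Real.sqrt (∑ i, (a i j) ^ 2) := by
    intro j
    rw [EuclideanSpace.norm_eq]
    congr 1; exact Finset.sum_congr rfl fun i _ => by rw [Real.norm_eq_abs, sq_abs]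
  have h1 : Real.sqrt (∑ i, (∑ j, a i j) ^ 2) = ‖∑ j, u j‖ := by
    rw [EuclideanSpace.norm_eq]
    congr 1; apply Finset.sum_congr rfl; intro i _
    have : (∑ j, u j) i = ∑ j, a i j := by
      simp only [u]
      simp
    rw [this, Real.norm_eq_abs, sq_abs]
  rw [h1]
  calc ‖∑ j, u j‖ ≤ ∑ j, ‖u j‖ := norm_sum_le _ _
    _ = _ := Finset.sum_congr rfl fun j _ => hnorm j

/-- Splitting a sum over words according to a subset of positions. -/
lemma factor_sum {N k : ℕ} (F G : List (Fin N) → ℝ) (S : Finset (Fin k)) :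
    ∑ f : Fin k → Fin N, F ((S.sort (· ≤ ·)).map f) * G ((Sᶜ.sort (· ≤ ·)).map f)
      = (∑ g : Fin (S.sort (· ≤ ·)).length → Fin N, F (List.ofFn g)) *
        (∑ h : Fin (Sᶜ.sort (· ≤ ·)).length → Fin N, G (List.ofFn h)) := by
  classical
  set lS := S.sort (· ≤ ·) with hlS
  set lT := Sᶜ.sort (· ≤ ·) with hlT
  let Φ : (Fin k → Fin N) → ((Fin lS.length → Fin N) × (Fin lT.length → Fin N)) :=
    fun f => (f ∘ lS.get, f ∘ lT.get)
  have hbij : Function.Bijective Φ := by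
    rw [Fintype.bijective_iff_injective_and_card]
    constructor
    · intro f f' hff
      funext x
      by_cases hx : x ∈ S
      · have hx' : x ∈ lS := (Finset.mem_sort _).2 hx
        obtain ⟨i, hi⟩ := List.get_of_mem hx'
        have := congrFun (congrArg Prod.fst hff) i
        simp only [Φ, Function.comp_apply] at this
        rwa [hi] at this
      · have hx' : x ∈ lT := (Finset.mem_sort _).2 (Finset.mem_compl.2 hx)
        obtain ⟨i, hi⟩ := List.get_of_mem hx'
        have := congrFun (congrArg Prod.snd hff) i
        simp only [Φ, Function.comp_apply] at this
        rwa [hi] at this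
    · simp only [Fintype.card_prod, Fintype.card_fun, Fintype.card_fin]
      rw [← pow_add]
      congr 1
      simp only [hlS, hlT, Finset.length_sort]
      rw [Finset.card_add_card_compl, Fintype.card_fin]
  rw [Fintype.sum_bijective Φ hbij _
    (fun p => F (List.ofFn p.1) * G (List.ofFn p.2))
    (fun f => by rw [map_sort_eq_ofFn, map_sort_eq_ofFn])]
  rw [Fintype.sum_prod_type]
  rw [Finset.sum_mul_sum]

end Aux

/-- Quantitative core of estimate (2) in Theorem 5.3 of the paper: if
`ζ_w = Σ_{J ⊆ {1,…,k}} X_{w_J}(v_{w_{Jᶜ}})` for every word `w` of length `k ≤ m` over the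
alphabet `{1,…,N}`, then `(Σ_{|w|≤m} ‖ζ_w‖²)^{1/2} ≤ √(2/(4N−1)) (2√N)^{m+1}
(Σ_{|w|≤m} ‖X_w‖) (Σ_{|w|≤m} ‖v_w‖²)^{1/2}`.  Words of length `k` are enumerated as
`List.ofFn f` for `f : Fin k → Fin N`. -/
theorem leibniz_word_estimate
    {H : Type*} [NormedAddCommGroup H] [InnerProductSpace ℂ H] [CompleteSpace H]
    (N m : ℕ) (hN : 0 < N) (hm : 0 < m)
    (X : List (Fin N) → H →L[ℂ] H)
    (v ζ : List (Fin N) → H)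
    (hrel : ∀ w : List (Fin N), w.length ≤ m →
      ζ w = ∑ J : Finset (Fin w.length), X (wordSelect w J) (v (wordSelect w Jᶜ))) :
    Real.sqrt (∑ k ∈ Finset.range (m + 1),
        ∑ f : Fin k → Fin N, ‖ζ (List.ofFn f)‖ ^ 2) ≤
      Real.sqrt (2 / (4 * (N : ℝ) - 1)) * (2 * Real.sqrt N) ^ (m + 1) *
        (∑ k ∈ Finset.range (m + 1), ∑ f : Fin k → Fin N, ‖X (List.ofFn f)‖) *
        Real.sqrt (∑ k ∈ Finset.range (m + 1),
          ∑ f : Fin k → Fin N, ‖v (List.ofFn f)‖ ^ 2) := by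
  classical
  set A : ℝ := ∑ k ∈ Finset.range (m + 1), ∑ f : Fin k → Fin N, ‖X (List.ofFn f)‖ with hA
  set TV : ℝ := ∑ k ∈ Finset.range (m + 1), ∑ f : Fin k → Fin N, ‖v (List.ofFn f)‖ ^ 2 with hTV
  have hA0 : 0 ≤ A := Finset.sum_nonneg fun _ _ =>
    Finset.sum_nonneg fun _ _ => norm_nonneg _
  have hTV0 : 0 ≤ TV := Finset.sum_nonneg fun _ _ =>
    Finset.sum_nonneg fun _ _ => sq_nonneg _
  -- the per-length estimate
  have key : ∀ k, k ≤ m →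
      ∑ f : Fin k → Fin N, ‖ζ (List.ofFn f)‖ ^ 2 ≤ (4 : ℝ) ^ k * (A ^ 2 * TV) := by
    intro k hk
    -- rewrite the relation over subsets of `Fin k`
    have hz : ∀ f : Fin k → Fin N, ζ (List.ofFn f) =
        ∑ S : Finset (Fin k),
          X ((S.sort (· ≤ ·)).map f) (v ((Sᶜ.sort (· ≤ ·)).map f)) := by
      intro f
      have hlen : (List.ofFn f).length ≤ m := by rw [List.length_ofFn]; exact hk
      rw [hrel (List.ofFn f) hlen]
      refine Fintype.sum_equiv
        (Equiv.finsetCongr (finCongr (List.length_ofFn (f := f)))) _ _ ?_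
      intro J
      have h1 : wordSelect (List.ofFn f) J
          = (((Equiv.finsetCongr (finCongr (List.length_ofFn (f := f)))) J).sort (· ≤ ·)).map f := by
        rw [wordSelect_ofFn]; rfl
      have h2 : wordSelect (List.ofFn f) Jᶜ
          = ((((Equiv.finsetCongr (finCongr (List.length_ofFn (f := f)))) J)ᶜ).sort (· ≤ ·)).map f := by
        rw [wordSelect_ofFn]
        rw [Equiv.finsetCongr_apply, compl_map_finCongr]
      rw [h1, h2]
    -- pointwise triangle + operator norm bound
    have hpt : ∀ f : Fin k → Fin N, ‖ζ (List.ofFn f)‖ ≤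
        ∑ S : Finset (Fin k),
          ‖X ((S.sort (· ≤ ·)).map f)‖ * ‖v ((Sᶜ.sort (· ≤ ·)).map f)‖ := by
      intro f
      rw [hz f]
      refine le_trans (norm_sum_le _ _) (Finset.sum_le_sum fun S _ => ?_)
      exact ContinuousLinearMap.le_opNorm _ _
    -- Minkowski and factorization : per-subset bound
    have hSbound : ∀ S : Finset (Fin k),
        Real.sqrt (∑ f : Fin k → Fin N,
          (‖X ((S.sort (· ≤ ·)).map f)‖ * ‖v ((Sᶜ.sort (· ≤ ·)).map f)‖) ^ 2)
          ≤ A * Real.sqrt TV := by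
      intro S
      have hfac : ∑ f : Fin k → Fin N,
          (‖X ((S.sort (· ≤ ·)).map f)‖ * ‖v ((Sᶜ.sort (· ≤ ·)).map f)‖) ^ 2
          = (∑ g : Fin (S.sort (· ≤ ·)).length → Fin N, ‖X (List.ofFn g)‖ ^ 2) *
            (∑ h : Fin (Sᶜ.sort (· ≤ ·)).length → Fin N, ‖v (List.ofFn h)‖ ^ 2) := by
        rw [← factor_sum (fun l => ‖X l‖ ^ 2) (fun l => ‖v l‖ ^ 2) S]
        exact Finset.sum_congr rfl fun f _ => by ring
      rw [hfac]
      have hXle : (∑ g : Fin (S.sort (· ≤ ·)).length → Fin N, ‖X (List.ofFn g)‖ ^ 2)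
          ≤ A ^ 2 := by
        refine le_trans (Finset.sum_sq_le_sq_sum_of_nonneg fun _ _ => norm_nonneg _) ?_
        have hmem : (S.sort (· ≤ ·)).length ∈ Finset.range (m + 1) := by
          rw [Finset.mem_range, Finset.length_sort]
          exact Nat.lt_succ_of_le (le_trans (by simpa using Finset.card_le_univ S) hk)
        have hone : (∑ g : Fin (S.sort (· ≤ ·)).length → Fin N, ‖X (List.ofFn g)‖) ≤ A :=
          Finset.single_le_sum
            (f := fun k' => ∑ f : Fin k' → Fin N, ‖X (List.ofFn f)‖)
            (fun _ _ => Finset.sum_nonneg fun _ _ => norm_nonneg _) hmem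
        exact pow_le_pow_left₀ (Finset.sum_nonneg fun _ _ => norm_nonneg _) hone 2
      have hVle : (∑ h : Fin (Sᶜ.sort (· ≤ ·)).length → Fin N, ‖v (List.ofFn h)‖ ^ 2)
          ≤ TV := by
        have hmem : (Sᶜ.sort (· ≤ ·)).length ∈ Finset.range (m + 1) := by
          rw [Finset.mem_range, Finset.length_sort]
          exact Nat.lt_succ_of_le (le_trans (by simpa using Finset.card_le_univ Sᶜ) hk)
        exact Finset.single_le_sum
          (f := fun k' => ∑ f : Fin k' → Fin N, ‖v (List.ofFn f)‖ ^ 2)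
          (fun _ _ => Finset.sum_nonneg fun _ _ => sq_nonneg _) hmem
      calc Real.sqrt (_ * _)
          ≤ Real.sqrt (A ^ 2 * TV) := by
            apply Real.sqrt_le_sqrt
            exact mul_le_mul hXle hVle
              (Finset.sum_nonneg fun _ _ => sq_nonneg _) (sq_nonneg _)
        _ = A * Real.sqrt TV := by
            rw [Real.sqrt_mul (sq_nonneg _), Real.sqrt_sq hA0]
    -- combine over all subsets
    have hsqrt : Real.sqrt (∑ f : Fin k → Fin N, ‖ζ (List.ofFn f)‖ ^ 2)
        ≤ (2 : ℝ) ^ k * (A * Real.sqrt TV) := by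
      have step1 : Real.sqrt (∑ f : Fin k → Fin N, ‖ζ (List.ofFn f)‖ ^ 2)
          ≤ Real.sqrt (∑ f : Fin k → Fin N,
              (∑ S : Finset (Fin k),
                ‖X ((S.sort (· ≤ ·)).map f)‖ * ‖v ((Sᶜ.sort (· ≤ ·)).map f)‖) ^ 2) := by
        apply Real.sqrt_le_sqrt
        refine Finset.sum_le_sum fun f _ => ?_
        exact pow_le_pow_left₀ (norm_nonneg _) (hpt f) 2
      have step2 := sqrt_sum_sq_sum_le
        (fun (f : Fin k → Fin N) (S : Finset (Fin k)) =>
          ‖X ((S.sort (· ≤ ·)).map f)‖ * ‖v ((Sᶜ.sort (· ≤ ·)).map f)‖)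
      have step3 : (∑ S : Finset (Fin k),
          Real.sqrt (∑ f : Fin k → Fin N,
            (‖X ((S.sort (· ≤ ·)).map f)‖ * ‖v ((Sᶜ.sort (· ≤ ·)).map f)‖) ^ 2))
          ≤ ∑ _S : Finset (Fin k), A * Real.sqrt TV :=
        Finset.sum_le_sum fun S _ => hSbound S
      have hcard : (∑ _S : Finset (Fin k), A * Real.sqrt TV)
          = (2 : ℝ) ^ k * (A * Real.sqrt TV) := by
        rw [Finset.sum_const, Finset.card_univ, Fintype.card_finset, Fintype.card_fin,
          nsmul_eq_mul]
        push_cast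
        ring
      calc Real.sqrt (∑ f : Fin k → Fin N, ‖ζ (List.ofFn f)‖ ^ 2)
          ≤ _ := step1
        _ ≤ _ := step2
        _ ≤ _ := step3
        _ = _ := hcard
    -- square the estimate
    have hc0 : (0 : ℝ) ≤ (2 : ℝ) ^ k * (A * Real.sqrt TV) := by positivity
    have := pow_le_pow_left₀ (Real.sqrt_nonneg _) hsqrt 2
    rw [Real.sq_sqrt (Finset.sum_nonneg fun _ _ => sq_nonneg _)] at this
    calc ∑ f : Fin k → Fin N, ‖ζ (List.ofFn f)‖ ^ 2
        ≤ ((2 : ℝ) ^ k * (A * Real.sqrt TV)) ^ 2 := this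
      _ = (4 : ℝ) ^ k * (A ^ 2 * TV) := by
          have h2 : ((2 : ℝ) ^ k) ^ 2 = (4 : ℝ) ^ k := by
            rw [← pow_mul, mul_comm k 2, pow_mul]; norm_num
          rw [mul_pow, h2, mul_pow, Real.sq_sqrt hTV0]
  -- sum the per-length estimates
  have hTZ : (∑ k ∈ Finset.range (m + 1), ∑ f : Fin k → Fin N, ‖ζ (List.ofFn f)‖ ^ 2)
      ≤ (∑ k ∈ Finset.range (m + 1), (4 : ℝ) ^ k) * (A ^ 2 * TV) := by
    rw [Finset.sum_mul]
    exact Finset.sum_le_sum fun k hk => key k (Nat.lt_succ_iff.mp (Finset.mem_range.mp hk))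
  -- the numerical comparison
  set D : ℝ := Real.sqrt (2 / (4 * (N : ℝ) - 1)) * (2 * Real.sqrt N) ^ (m + 1) with hD
  have hN1 : (1 : ℝ) ≤ (N : ℝ) := by exact_mod_cast hN
  have h4N : (0 : ℝ) < 4 * (N : ℝ) - 1 := by linarith
  have hD0 : 0 ≤ D := by positivity
  have hD2 : D ^ 2 = 2 / (4 * (N : ℝ) - 1) * ((4 : ℝ) * N) ^ (m + 1) := by
    rw [hD, mul_pow, Real.sq_sqrt (by positivity), ← pow_mul, mul_comm (m + 1) 2, pow_mul,
      mul_pow, Real.sq_sqrt (by positivity : (0:ℝ) ≤ (N : ℝ))]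
    norm_num
  have hgeom : (∑ k ∈ Finset.range (m + 1), (4 : ℝ) ^ k) ≤ D ^ 2 := by
    rw [geom_sum_eq (by norm_num : (4 : ℝ) ≠ 1), hD2]
    have hP : (1 : ℝ) ≤ (4 : ℝ) ^ (m + 1) := by
      calc (1 : ℝ) = 1 ^ (m + 1) := (one_pow _).symm
        _ ≤ 4 ^ (m + 1) := pow_le_pow_left₀ (by norm_num) (by norm_num) _
    have hQ : (N : ℝ) ≤ (N : ℝ) ^ (m + 1) := le_self_pow₀ hN1 (by omega)
    rw [mul_pow, div_mul_eq_mul_div, div_le_div_iff₀ (by norm_num) h4N]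
    have hP0 : (0 : ℝ) < (4 : ℝ) ^ (m + 1) := by positivity
    nlinarith [mul_le_mul_of_nonneg_left hQ (le_of_lt hP0),
      mul_le_mul_of_nonneg_right hP (le_of_lt (lt_of_lt_of_le zero_lt_one hN1)),
      mul_pos hP0 (lt_of_lt_of_le zero_lt_one hN1)]
  -- conclude
  have hfin : (∑ k ∈ Finset.range (m + 1), ∑ f : Fin k → Fin N, ‖ζ (List.ofFn f)‖ ^ 2)
      ≤ (D * A * Real.sqrt TV) ^ 2 := by
    have : (D * A * Real.sqrt TV) ^ 2 = D ^ 2 * (A ^ 2 * TV) := by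
      rw [mul_pow, mul_pow, Real.sq_sqrt hTV0]; ring
    rw [this]
    exact le_trans hTZ (mul_le_mul_of_nonneg_right hgeom (by positivity))
  calc Real.sqrt (∑ k ∈ Finset.range (m + 1), ∑ f : Fin k → Fin N, ‖ζ (List.ofFn f)‖ ^ 2)
      ≤ Real.sqrt ((D * A * Real.sqrt TV) ^ 2) := Real.sqrt_le_sqrt hfin
    _ = D * A * Real.sqrt TV := Real.sqrt_sq (by positivity)
end

section
/- Let G be a second countable, locally compact Hausdorff topological group and μ a left Haar measure on G. Let T be a bounded linear operator on the complex Hilbert space L²(G, μ) such that: (i) T commutes with the multiplication operator M_f by every bounded measurable function f : G → ℂ, i.e., T(f·ξ) = f·(Tξ) for all ξ ∈ L²(G, μ); and (ii) T commutes with the left-translation unitary u_g for every g ∈ G, where (u_g ξ)(x) = ξ(g⁻¹x). Then T is a scalar multiple of the identity operator: there exists c ∈ ℂ with T = c·I. Equivalently, the commutant of the set of operators {M_f : f ∈ L^∞(G, μ)} ∪ {u_g : g ∈ G} in B(L²(G, μ)) consists only of the scalars, so the von Neumann algebra generated by L^∞(G, μ) and the left-translation unitaries is all of B(L²(G, μ)).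 -/
open MeasureTheory Filter Set
open scoped ENNReal NNReal Topology

set_option maxHeartbeats 2000000 in
/-- A bounded operator on `L²(G, μ)` (`μ` a left Haar measure on a second countable locally
compact group `G`) commuting with all multiplication operators by bounded measurable functions
and with all left translations is a scalar multiple of the identity: the von Neumann algebra
generated by `L^∞(G)` and the left translation unitaries is all of `B(L²(G))`
(concluding assertion of Theorem 6.1 of the paper). -/
theorem commutant_of_mult_and_translations_is_scalar
    {G : Type*} [Group G] [TopologicalSpace G] [IsTopologicalGroup G]
    [LocallyCompactSpace G] [T2Space G] [SecondCountableTopology G]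
    [MeasurableSpace G] [BorelSpace G]
    (μ : Measure G) [μ.IsHaarMeasure]
    (T : Lp ℂ 2 μ →L[ℂ] Lp ℂ 2 μ)
    (hmul : ∀ (f : G → ℂ), Measurable f → (∃ C : ℝ, ∀ x, ‖f x‖ ≤ C) →
      ∀ (ξ : Lp ℂ 2 μ)
        (h₁ : MemLp (fun x => f x * ξ x) 2 μ)
        (h₂ : MemLp (fun x => f x * (T ξ) x) 2 μ),
        T (h₁.toLp _) = h₂.toLp _)
    (htrans : ∀ (g : G) (ξ : Lp ℂ 2 μ)
        (h₁ : MemLp (fun x => ξ (g⁻¹ * x)) 2 μ)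
        (h₂ : MemLp (fun x => (T ξ) (g⁻¹ * x)) 2 μ),
        T (h₁.toLp _) = h₂.toLp _) :
    ∃ c : ℂ, T = c • ContinuousLinearMap.id ℂ (Lp ℂ 2 μ) := by
  -- a strictly positive weight function with small integral
  obtain ⟨w₀, hw₀pos, hw₀meas, hw₀int⟩ :=
    exists_pos_lintegral_lt_of_sigmaFinite μ (ε := 1) one_ne_zero
  set v : G → ℝ≥0 := fun x => min (w₀ x) 1 with hv
  have hvmeas : Measurable v := hw₀meas.min measurable_const
  have hvpos : ∀ x, 0 < v x := fun x => lt_min (hw₀pos x) one_pos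
  have hvle1 : ∀ x, v x ≤ 1 := fun x => min_le_right _ _
  set w : G → ℂ := fun x => ((v x : ℝ) : ℂ) with hwdef
  have hwmeas : Measurable w :=
    Complex.measurable_ofReal.comp (measurable_coe_nnreal_real.comp hvmeas)
  have hwne : ∀ x, w x ≠ 0 := by
    intro x
    simp only [hwdef, ne_eq, Complex.ofReal_eq_zero, NNReal.coe_eq_zero]
    exact (hvpos x).ne'
  have hwnorm : ∀ x, ‖w x‖ = (v x : ℝ) := by
    intro x
    rw [hwdef]
    rw [Complex.norm_real, Real.norm_of_nonneg (v x).coe_nonneg]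
  have hwmem : MemLp w 2 μ := by
    refine ⟨hwmeas.aestronglyMeasurable, ?_⟩
    rw [eLpNorm_eq_lintegral_rpow_enorm_toReal (by norm_num) (by norm_num)]
    refine ENNReal.rpow_lt_top_of_nonneg (by positivity) ?_
    have hb : ∀ x, (‖w x‖₊ : ℝ≥0∞) ^ ((2 : ℝ≥0∞).toReal) ≤ (w₀ x : ℝ≥0∞) := by
      intro x
      have h1 : (‖w x‖₊ : ℝ≥0∞) = (v x : ℝ≥0∞) := by
        congr 1
        ext
        simp [coe_nnnorm, hwnorm x]
      rw [h1]
      calc (v x : ℝ≥0∞) ^ ((2 : ℝ≥0∞).toReal) ≤ (v x : ℝ≥0∞) ^ (1 : ℝ) := by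
            apply ENNReal.rpow_le_rpow_of_exponent_ge
            · exact_mod_cast hvle1 x
            · norm_num
        _ = (v x : ℝ≥0∞) := ENNReal.rpow_one _
        _ ≤ (w₀ x : ℝ≥0∞) := by exact_mod_cast min_le_left _ _
    exact ((lintegral_mono hb).trans_lt (hw₀int.trans (by norm_num))).ne
  set W : Lp ℂ 2 μ := hwmem.toLp w with hWdef
  have hWw : ⇑W =ᵐ[μ] w := hwmem.coeFn_toLp
  set ψ := T W with hψdef
  have hψsm : StronglyMeasurable ⇑ψ := Lp.stronglyMeasurable ψ
  set h : G → ℂ := fun x => ψ x / w x with hhdef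
  have hhmeas : Measurable h := hψsm.measurable.div hwmeas
  have hψeq : ∀ x, ψ x = h x * w x := fun x => (div_mul_cancel₀ _ (hwne x)).symm
  -- main step : T is multiplication by h
  have hmain : ∀ ξ : Lp ℂ 2 μ, ⇑(T ξ) =ᵐ[μ] fun x => h x * ξ x := by
    intro ξ
    have hξsm : StronglyMeasurable ⇑ξ := Lp.stronglyMeasurable ξ
    set f : ℕ → G → ℂ := fun n x => if ‖ξ x‖ ≤ n * ‖w x‖ then ξ x / w x else 0 with hfdef
    have hfmeas : ∀ n, Measurable (f n) := fun n =>
      Measurable.ite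
        (measurableSet_le hξsm.measurable.norm (measurable_const.mul hwmeas.norm))
        (hξsm.measurable.div hwmeas) measurable_const
    have hwpos : ∀ x, (0:ℝ) < ‖w x‖ := fun x => norm_pos_iff.mpr (hwne x)
    have hfbd : ∀ n x, ‖f n x‖ ≤ n := by
      intro n x
      by_cases hc : ‖ξ x‖ ≤ n * ‖w x‖
      · simp only [hfdef, if_pos hc, norm_div]
        rw [div_le_iff₀ (hwpos x)]
        exact hc
      · simp only [hfdef, if_neg hc, norm_zero]
        positivity
    have h₁ : ∀ n, MemLp (fun x => f n x * W x) 2 μ := fun n =>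
      MemLp.of_le_mul (Lp.memLp W)
        ((hfmeas n).aestronglyMeasurable.mul (Lp.aestronglyMeasurable W))
        (Eventually.of_forall fun x => by
          rw [norm_mul]
          exact mul_le_mul_of_nonneg_right (hfbd n x) (norm_nonneg _))
    have h₂ : ∀ n, MemLp (fun x => f n x * ψ x) 2 μ := fun n =>
      MemLp.of_le_mul (Lp.memLp ψ)
        ((hfmeas n).aestronglyMeasurable.mul (Lp.aestronglyMeasurable ψ))
        (Eventually.of_forall fun x => by
          rw [norm_mul]
          exact mul_le_mul_of_nonneg_right (hfbd n x) (norm_nonneg _))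
    have hTn : ∀ n, T ((h₁ n).toLp _) = (h₂ n).toLp _ := fun n =>
      hmul (f n) (hfmeas n) ⟨n, hfbd n⟩ W (h₁ n) (h₂ n)
    -- convergence of the truncations to ξ in L²
    have hconv1 : Tendsto (fun n => eLpNorm ((fun x => f n x * W x) - ⇑ξ) 2 μ)
        atTop (𝓝 0) := by
      have heq : ∀ n, eLpNorm ((fun x => f n x * W x) - ⇑ξ) 2 μ
          = (∫⁻ x, (‖f n x * W x - ξ x‖₊ : ℝ≥0∞) ^ (2:ℝ) ∂μ) ^ ((1:ℝ)/2) := by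
        intro n
        rw [eLpNorm_eq_lintegral_rpow_enorm_toReal (by norm_num) (by norm_num)]
        norm_num [Pi.sub_apply]
        simp only [enorm_eq_nnnorm]
      have h0 : Tendsto (fun n => ∫⁻ x, (‖f n x * W x - ξ x‖₊ : ℝ≥0∞) ^ (2:ℝ) ∂μ)
          atTop (𝓝 0) := by
        have hint : ∫⁻ x, (‖ξ x‖₊ : ℝ≥0∞) ^ (2:ℝ) ∂μ ≠ ∞ := by
          have h2 := (Lp.memLp ξ).2
          rw [eLpNorm_eq_lintegral_rpow_enorm_toReal (by norm_num) (by norm_num)] at h2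
          intro hcontra
          rw [show ((2:ℝ≥0∞).toReal) = (2:ℝ) by norm_num] at h2
          simp only [enorm_eq_nnnorm] at h2
          rw [hcontra] at h2
          simp [ENNReal.top_rpow_of_pos] at h2
        have hF0 : (0 : ℝ≥0∞) = ∫⁻ (_ : G), 0 ∂μ := by simp
        rw [hF0]
        refine tendsto_lintegral_of_dominated_convergence
          (fun x => (‖ξ x‖₊ : ℝ≥0∞) ^ (2:ℝ)) (fun n => ?_) (fun n => ?_) hint ?_
        · exact (((hfmeas n).mul (Lp.stronglyMeasurable W).measurable).sub
            hξsm.measurable).nnnorm.coe_nnreal_ennreal.pow_const _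
        · filter_upwards [hWw] with x hx
          have hb : ‖f n x * W x - ξ x‖₊ ≤ ‖ξ x‖₊ := by
            rw [← NNReal.coe_le_coe, coe_nnnorm, coe_nnnorm]
            by_cases hc : ‖ξ x‖ ≤ n * ‖w x‖
            · have hfx : f n x * W x = ξ x := by
                rw [hx]
                simp only [hfdef, if_pos hc]
                exact div_mul_cancel₀ _ (hwne x)
              simp [hfx]
            · have hfx : f n x * W x = 0 := by
                simp only [hfdef, if_neg hc, zero_mul]
              simp [hfx]
          exact ENNReal.rpow_le_rpow (by exact_mod_cast hb) (by norm_num)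
        · filter_upwards [hWw] with x hx
          obtain ⟨N, hN⟩ := exists_nat_ge (‖ξ x‖ / ‖w x‖)
          refine tendsto_atTop_of_eventually_const (i₀ := N) fun n hn => ?_
          have hcond : ‖ξ x‖ ≤ (n:ℝ) * ‖w x‖ := by
            calc ‖ξ x‖ = ‖ξ x‖ / ‖w x‖ * ‖w x‖ := (div_mul_cancel₀ _ (hwpos x).ne').symm
              _ ≤ (N:ℝ) * ‖w x‖ := mul_le_mul_of_nonneg_right hN (hwpos x).le
              _ ≤ (n:ℝ) * ‖w x‖ := by
                  have : (N:ℝ) ≤ (n:ℝ) := by exact_mod_cast hn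
                  exact mul_le_mul_of_nonneg_right this (hwpos x).le
          have : f n x * W x - ξ x = 0 := by
            rw [hx]
            simp only [hfdef, if_pos hcond]
            rw [div_mul_cancel₀ _ (hwne x), sub_self]
          rw [this]
          simp [ENNReal.zero_rpow_of_pos]
      have hrc : Tendsto (fun y : ℝ≥0∞ => y ^ ((1:ℝ)/2)) (𝓝 0) (𝓝 0) := by
        have := (ENNReal.continuous_rpow_const (y := (1:ℝ)/2)).tendsto 0
        rwa [ENNReal.zero_rpow_of_pos (by norm_num)] at this
      simp only [heq]
      exact hrc.comp h0
    have htend1 : Tendsto (fun n => (h₁ n).toLp _) atTop (𝓝 ξ) := by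
      have := (Lp.tendsto_Lp_iff_tendsto_eLpNorm'' (fun n => fun x => f n x * W x)
        h₁ ⇑ξ (Lp.memLp ξ)).mpr hconv1
      rwa [Lp.toLp_coeFn] at this
    have htend2 : Tendsto (fun n => (h₂ n).toLp _) atTop (𝓝 (T ξ)) := by
      have hfn : (fun n => (h₂ n).toLp _) = fun n => T ((h₁ n).toLp _) :=
        funext fun n => (hTn n).symm
      rw [hfn]
      exact (T.continuous.tendsto ξ).comp htend1
    have hconv2 : Tendsto (fun n => eLpNorm ((fun x => f n x * ψ x) - ⇑(T ξ)) 2 μ)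
        atTop (𝓝 0) := by
      refine (Lp.tendsto_Lp_iff_tendsto_eLpNorm'' (fun n => fun x => f n x * ψ x)
        h₂ ⇑(T ξ) (Lp.memLp (T ξ))).mp ?_
      rwa [Lp.toLp_coeFn]
    have him : TendstoInMeasure μ (fun n => fun x => f n x * ψ x) atTop ⇑(T ξ) :=
      tendstoInMeasure_of_tendsto_eLpNorm (p := 2) (by norm_num)
        (fun n => (hfmeas n).aestronglyMeasurable.mul (Lp.aestronglyMeasurable ψ))
        (Lp.aestronglyMeasurable _) hconv2
    obtain ⟨ns, hns, hae⟩ := him.exists_seq_tendsto_ae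
    filter_upwards [hae] with x hx
    have hlim2 : Tendsto (fun i => f (ns i) x * ψ x) atTop (𝓝 (h x * ξ x)) := by
      obtain ⟨N, hN⟩ := exists_nat_ge (‖ξ x‖ / ‖w x‖)
      refine tendsto_atTop_of_eventually_const (i₀ := N) fun i hi => ?_
      have hni : (N:ℝ) ≤ ((ns i : ℕ) : ℝ) := by
        exact_mod_cast le_trans hi (hns.le_apply)
      have hcond : ‖ξ x‖ ≤ ((ns i : ℕ) : ℝ) * ‖w x‖ := by
        calc ‖ξ x‖ = ‖ξ x‖ / ‖w x‖ * ‖w x‖ := (div_mul_cancel₀ _ (hwpos x).ne').symm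
          _ ≤ (N:ℝ) * ‖w x‖ := mul_le_mul_of_nonneg_right hN (hwpos x).le
          _ ≤ _ := mul_le_mul_of_nonneg_right hni (hwpos x).le
      simp only [hfdef, if_pos hcond, hhdef]
      field_simp
    exact tendsto_nhds_unique hx hlim2
  -- translation invariance of h
  have hinv : ∀ g : G, ∀ᵐ x ∂μ, h x = h (g⁻¹ * x) := by
    intro g
    have mp : MeasurePreserving (fun x => g⁻¹ * x) μ μ := measurePreserving_mul_left μ g⁻¹
    have hWg : MemLp (fun x => W (g⁻¹ * x)) 2 μ := by
      have h0 : MemLp (⇑W) 2 (Measure.map (fun x => g⁻¹ * x) μ) := by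
        rw [mp.map_eq]; exact Lp.memLp W
      exact h0.comp_of_map mp.measurable.aemeasurable
    have hψg : MemLp (fun x => ψ (g⁻¹ * x)) 2 μ := by
      have h0 : MemLp (⇑ψ) 2 (Measure.map (fun x => g⁻¹ * x) μ) := by
        rw [mp.map_eq]; exact Lp.memLp ψ
      exact h0.comp_of_map mp.measurable.aemeasurable
    have hT := htrans g W hWg hψg
    have e1 : ⇑(hWg.toLp _) =ᵐ[μ] fun x => w (g⁻¹ * x) := by
      refine hWg.coeFn_toLp.trans ?_
      exact mp.quasiMeasurePreserving.ae_eq_comp hWw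
    have e2 := hmain (hWg.toLp _)
    rw [hT] at e2
    have e3 : ⇑(hψg.toLp _) =ᵐ[μ] fun x => ψ (g⁻¹ * x) := hψg.coeFn_toLp
    have e5 : (fun x => ψ (g⁻¹ * x)) =ᵐ[μ] fun x => h x * w (g⁻¹ * x) := by
      refine (e3.symm.trans e2).trans ?_
      filter_upwards [e1] with x hx
      rw [hx]
    filter_upwards [e5] with x hx
    rw [hψeq (g⁻¹ * x)] at hx
    exact (mul_right_cancel₀ (hwne (g⁻¹ * x)) hx).symm
  -- h is a.e. constant
  have hμne : μ ≠ 0 := by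
    intro h0
    have := isOpen_univ.measure_pos μ (⟨1, trivial⟩ : (Set.univ : Set G).Nonempty)
    rw [h0] at this
    simp at this
  haveI : (ae μ).NeBot := ae_neBot.mpr hμne
  have hps : MeasurableSet {z : G × G | h z.2 = h (z.1⁻¹ * z.2)} :=
    measurableSet_eq_fun (hhmeas.comp measurable_snd)
      (hhmeas.comp (measurable_fst.inv.mul measurable_snd))
  have hcomm : ∀ᵐ x ∂μ, ∀ᵐ g ∂μ, h x = h (g⁻¹ * x) :=
    (Measure.ae_ae_comm hps).mp (Filter.Eventually.of_forall hinv)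
  obtain ⟨x₀, hx₀⟩ := hcomm.exists
  have hconst : ∀ᵐ t ∂μ, h t = h x₀ := by
    have h1 : μ {g : G | ¬ h (g⁻¹ * x₀) = h x₀} = 0 := by
      have h2 : ∀ᵐ g ∂μ, h (g⁻¹ * x₀) = h x₀ := hx₀.mono fun g hg => hg.symm
      simpa [ae_iff] using h2
    have h2 : {g : G | ¬ h (g⁻¹ * x₀) = h x₀} = ({y : G | ¬ h (y * x₀) = h x₀})⁻¹ := by
      ext g; simp [Set.mem_inv]
    rw [h2, measure_inv_null] at h1
    have h3 : {y : G | ¬ h (y * x₀) = h x₀}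
        = (fun y => y * x₀) ⁻¹' {t | ¬ h t = h x₀} := rfl
    rw [h3, measure_mul_right_null] at h1
    rw [ae_iff]
    exact h1
  refine ⟨h x₀, ?_⟩
  refine ContinuousLinearMap.ext fun ξ => ?_
  rw [ContinuousLinearMap.smul_apply, ContinuousLinearMap.id_apply]
  apply Lp.ext
  calc ⇑(T ξ) =ᵐ[μ] fun x => h x * ξ x := hmain ξ
    _ =ᵐ[μ] fun x => h x₀ * ξ x := by
        filter_upwards [hconst] with x hx
        rw [hx]
    _ =ᵐ[μ] ⇑(h x₀ • ξ) := by
        filter_upwards [Lp.coeFn_smul (h x₀) ξ] with x hx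
        rw [hx, Pi.smul_apply, smul_eq_mul]
end
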